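/- Let M be a topological space and ≪ a binary relation on M with open pasts, and assume that every point x ∈ M lies in the closure of I⁺(x) (every neighborhood of x contains a point y with x ≪ y). If (Uₙ)_{n ∈ ℕ} is a sequence of past sets, then the interior of ⋂ₙ Uₙ is a past set. -/
import Mathlib


open Set Filter Topology MeasureTheory

/-- The chronological past of a set `A` with respect to relation `r`. -/
def chronPast {M : Type*} (r : M → M → Prop) (A : Set M) : Set M :=
  {x | ∃ y ∈ A, r x y}

/-- The chronological future of a set `A` with respect to relation `r`. -/
def chronFut {M : Type*} (r : M → M → Prop) (A : Set M) : Set M :=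
  {x | ∃ y ∈ A, r y x}

/-- A past set: `I⁻(U) = U`. -/
def IsPastSet {M : Type*} (r : M → M → Prop) (U : Set M) : Prop :=
  chronPast r U = U

/-- A future set: `I⁺(U) = U`. -/
def IsFutureSet {M : Type*} (r : M → M → Prop) (U : Set M) : Prop :=
  chronFut r U = U

/-- An indecomposable past set (IP): a nonempty past set that is not the union of
two past sets, each a proper subset of it. -/
def IsIP {M : Type*} (r : M → M → Prop) (U : Set M) : Prop :=
  U.Nonempty ∧ IsPastSet r U ∧
    ¬ ∃ A B : Set M, IsPastSet r A ∧ IsPastSet r B ∧ A ⊂ U ∧ B ⊂ U ∧ A ∪ B = U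

/-- An indecomposable future set (IF). -/
def IsIF {M : Type*} (r : M → M → Prop) (U : Set M) : Prop :=
  U.Nonempty ∧ IsFutureSet r U ∧
    ¬ ∃ A B : Set M, IsFutureSet r A ∧ IsFutureSet r B ∧ A ⊂ U ∧ B ⊂ U ∧ A ∪ B = U

/-- A terminal indecomposable past set (TIP): an IP not of the form `I⁻(p)`. -/
def IsTIP {M : Type*} (r : M → M → Prop) (U : Set M) : Prop :=
  IsIP r U ∧ ∀ p : M, U ≠ chronPast r {p}

/-- A terminal indecomposable future set (TIF): an IF not of the form `I⁺(p)`. -/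
def IsTIF {M : Type*} (r : M → M → Prop) (U : Set M) : Prop :=
  IsIF r U ∧ ∀ p : M, U ≠ chronFut r {p}

/-- A minimal TIP: a TIP containing no TIP as a proper subset. -/
def IsMinTIP {M : Type*} (r : M → M → Prop) (U : Set M) : Prop :=
  IsTIP r U ∧ ∀ V : Set M, IsTIP r V → V ⊆ U → V = U

/-- With open pasts, and assuming every point is in the closure of its
chronological future, the interior of a countable intersection of past sets is a past set. -/
theorem stmt_6 {M : Type*} [TopologicalSpace M] (r : M → M → Prop)
    (hOpenPast : ∀ p : M, IsOpen (chronPast r {p}))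
    (hdense : ∀ x : M, x ∈ closure (chronFut r {x}))
    (U : ℕ → Set M) (hU : ∀ n, IsPastSet r (U n)) :
    IsPastSet r (interior (⋂ n, U n)) := by
  apply Set.eq_of_subset_of_subset
  · rintro x ⟨y, hy, hxy⟩
    have hsub : chronPast r {y} ⊆ ⋂ n, U n := by
      rintro z ⟨w, hw, hzw⟩
      simp only [Set.mem_singleton_iff] at hw
      rw [hw] at hzw
      refine Set.mem_iInter.2 fun n => ?_
      have hyU : y ∈ U n := Set.mem_iInter.1 (interior_subset hy) n
      rw [← hU n]
      exact ⟨y, hyU, hzw⟩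
    have hxm : x ∈ chronPast r {y} := ⟨y, rfl, hxy⟩
    exact interior_maximal hsub (hOpenPast y) hxm
  · intro x hx
    have h := hdense x
    rw [mem_closure_iff] at h
    obtain ⟨y, hyS, hyF⟩ := h _ isOpen_interior hx
    obtain ⟨z, hz, hr⟩ := hyF
    simp only [Set.mem_singleton_iff] at hz
    subst hz
    exact ⟨y, hyS, hr⟩
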